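/- Let f : ℝ → ℂ be integrable with integrable Fourier transform, and suppose f(t) = 0 for t < 0, f is continuous on (0,∞), and f(t) → 0 as t → ∞. If g : (0,∞) → ℂ is continuous with g(t) → 0 at ∞ and the Laplace transforms agree, ∫₀^∞ e^{-st} f(t) dt = ∫₀^∞ e^{-st} g(t) dt for all s ∈ (0,∞), then f(t) = g(t) for all t ∈ (0,∞). -/

import Mathlib

open MeasureTheory Set Filter Complex
open scoped ContDiff

set_option maxHeartbeats 1000000 in
/-- Uniqueness of the Laplace transform for continuous functions vanishing
at infinity: if f is integrable with integrable Fourier transform, vanishes on (-∞,0),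
is continuous on (0,∞) with f → 0 at ∞, g is continuous on (0,∞) with g → 0 at ∞ and
absolutely convergent Laplace transform, and the Laplace transforms of f and g agree on
(0,∞), then f = g on (0,∞). -/
theorem stmt_15 (f g : ℝ → ℂ)
    (hfint : Integrable f)
    (hfFint : Integrable (fun x : ℝ => ∫ t : ℝ, Complex.exp (-(Complex.I * x * t)) * f t))
    (hf0 : ∀ t : ℝ, t < 0 → f t = 0)
    (hfcont : ContinuousOn f (Ioi 0))
    (hflim : Tendsto f atTop (nhds 0))
    (hgcont : ContinuousOn g (Ioi 0))
    (hglim : Tendsto g atTop (nhds 0))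
    (hgint : ∀ s : ℝ, 0 < s →
      IntegrableOn (fun t : ℝ => Complex.exp (-(s * t : ℝ)) * g t) (Ioi 0))
    (heq : ∀ s : ℝ, 0 < s →
      (∫ t in Ioi (0:ℝ), Complex.exp (-(s * t : ℝ)) * f t)
        = ∫ t in Ioi (0:ℝ), Complex.exp (-(s * t : ℝ)) * g t) :
    ∀ t : ℝ, 0 < t → f t = g t := by
  set h : ℝ → ℂ := fun t => f t - g t with hh
  -- integrability of e^{-st} h on Ioi 0
  have hfm : AEStronglyMeasurable f (volume.restrict (Ioi (0:ℝ))) :=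
    hfint.aestronglyMeasurable.restrict
  have hgm : AEStronglyMeasurable g (volume.restrict (Ioi (0:ℝ))) :=
    hgcont.aestronglyMeasurable measurableSet_Ioi
  have hIntf : ∀ s : ℝ, 0 < s →
      IntegrableOn (fun t : ℝ => ((Real.exp (-(s*t)) : ℝ) : ℂ) * f t) (Ioi 0) := by
    intro s hs
    have hm : AEStronglyMeasurable (fun t : ℝ => ((Real.exp (-(s*t)) : ℝ) : ℂ))
        (volume.restrict (Ioi (0:ℝ))) := by
      exact (Complex.continuous_ofReal.comp (Real.continuous_exp.comp
        (by continuity))).aestronglyMeasurable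
    refine Integrable.mono hfint.restrict (hm.mul hfm) ?_
    refine (ae_restrict_iff' measurableSet_Ioi).2 (ae_of_all _ fun t ht => ?_)
    have h1 : Real.exp (-(s*t)) ≤ 1 := by
      rw [Real.exp_le_one_iff]
      have := mul_pos hs ht
      linarith
    have h0 : (0:ℝ) ≤ Real.exp (-(s*t)) := (Real.exp_pos _).le
    calc ‖((Real.exp (-(s*t)) : ℝ) : ℂ) * f t‖
        = Real.exp (-(s*t)) * ‖f t‖ := by
          rw [norm_mul, Complex.norm_real, Real.norm_eq_abs, _root_.abs_of_nonneg h0]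
      _ ≤ 1 * ‖f t‖ := by gcongr
      _ = ‖f t‖ := one_mul _
  have hIntg : ∀ s : ℝ, 0 < s →
      IntegrableOn (fun t : ℝ => ((Real.exp (-(s*t)) : ℝ) : ℂ) * g t) (Ioi 0) := by
    intro s hs
    have := hgint s hs
    simpa [Complex.ofReal_exp] using this
  have hInt : ∀ s : ℝ, 0 < s →
      IntegrableOn (fun t : ℝ => ((Real.exp (-(s*t)) : ℝ) : ℂ) * h t) (Ioi 0) := by
    intro s hs
    have := (hIntf s hs).sub (hIntg s hs)
    simpa [hh, mul_sub, Pi.sub_def] using this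
  have hL : ∀ s : ℝ, 0 < s →
      (∫ t in Ioi (0:ℝ), ((Real.exp (-(s*t)) : ℝ) : ℂ) * h t) = 0 := by
    intro s hs
    have e1 : (∫ t in Ioi (0:ℝ), ((Real.exp (-(s*t)) : ℝ) : ℂ) * h t)
        = (∫ t in Ioi (0:ℝ), ((Real.exp (-(s*t)) : ℝ) : ℂ) * f t)
          - ∫ t in Ioi (0:ℝ), ((Real.exp (-(s*t)) : ℝ) : ℂ) * g t := by
      rw [← integral_sub (hIntf s hs) (hIntg s hs)]
      simp [hh, mul_sub]
    rw [e1, sub_eq_zero]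
    have := heq s hs
    simpa [Complex.ofReal_exp] using this
  -- polynomial step
  have hA : ∀ q : Polynomial ℝ,
      (∫ t in Ioi (0:ℝ),
        ((Polynomial.eval (Real.exp (-t)) q * Real.exp (-t) : ℝ) : ℂ) * h t) = 0 ∧
      IntegrableOn (fun t : ℝ =>
        ((Polynomial.eval (Real.exp (-t)) q * Real.exp (-t) : ℝ) : ℂ) * h t) (Ioi 0) := by
    intro q
    induction q using Polynomial.induction_on' with
    | add p q hp hq =>
      have heqfun : (fun t : ℝ =>
          ((Polynomial.eval (Real.exp (-t)) (p + q) * Real.exp (-t) : ℝ) : ℂ) * h t)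
          = fun t : ℝ =>
            ((Polynomial.eval (Real.exp (-t)) p * Real.exp (-t) : ℝ) : ℂ) * h t
            + ((Polynomial.eval (Real.exp (-t)) q * Real.exp (-t) : ℝ) : ℂ) * h t := by
        funext t
        push_cast [Polynomial.eval_add]
        ring
      constructor
      · rw [heqfun, integral_add hp.2 hq.2, hp.1, hq.1, add_zero]
      · rw [heqfun]
        exact hp.2.add hq.2
    | monomial n a =>
      have key : (fun t : ℝ =>
          ((Polynomial.eval (Real.exp (-t)) (Polynomial.monomial n a) * Real.exp (-t) : ℝ) : ℂ) * h t)
          = fun t : ℝ => (a : ℂ) * (((Real.exp (-(((n:ℝ)+1)*t)) : ℝ) : ℂ) * h t) := by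
        funext t
        have : Real.exp (-(((n:ℝ)+1)*t)) = Real.exp (-t) ^ (n+1) := by
          rw [← Real.exp_nat_mul]
          congr 1
          push_cast
          ring
        rw [Polynomial.eval_monomial, this]
        push_cast
        ring
      have hpos : (0:ℝ) < (n:ℝ) + 1 := by positivity
      constructor
      · rw [key]
        rw [integral_const_mul, hL _ hpos, mul_zero]
      · rw [key]
        exact (hInt _ hpos).const_mul _
  -- the L¹ function k
  have hInt1 : IntegrableOn (fun t : ℝ => ((Real.exp (-t) : ℝ) : ℂ) * h t) (Ioi 0) := by
    have := hInt 1 one_pos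
    simpa using this
  set k : ℝ → ℂ := (Ioi (0:ℝ)).indicator (fun t => ((Real.exp (-t) : ℝ) : ℂ) * h t) with hk
  have hkint : Integrable k := hInt1.integrable_indicator measurableSet_Ioi
  -- norm integrand
  set C : ℝ := ∫ t in Ioi (0:ℝ), Real.exp (-t) * ‖h t‖ with hC
  have hCint : IntegrableOn (fun t : ℝ => Real.exp (-t) * ‖h t‖) (Ioi 0) := by
    have heqn : (fun t : ℝ => Real.exp (-t) * ‖h t‖)
        = fun t : ℝ => ‖((Real.exp (-t) : ℝ) : ℂ) * h t‖ := by
      funext t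
      rw [norm_mul, Complex.norm_real, Real.norm_eq_abs,
        _root_.abs_of_nonneg (Real.exp_pos _).le]
    rw [heqn]
    exact hInt1.norm
  have hC0 : 0 ≤ C := by
    rw [hC]
    positivity
  -- key: integral against compactly supported smooth functions vanishes
  have hB : ∀ φ : ℝ → ℝ, ContDiff ℝ ∞ φ → HasCompactSupport φ → ∫ x, φ x • k x = 0 := by
    intro φ hφd hφs
    have hφc : Continuous φ := hφd.continuous
    -- bound M for support
    obtain ⟨M, hM⟩ := hφs.isBounded.subset_closedBall 0
    have hφ0 : ∀ t : ℝ, M < |t| → φ t = 0 := by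
      intro t ht
      by_contra hne
      have : t ∈ tsupport φ := subset_tsupport φ (by simpa using hne)
      have := hM this
      simp only [Metric.mem_closedBall, Real.dist_eq, sub_zero] at this
      linarith
    -- ψ on [0,1]
    set ψ : ℝ → ℝ := fun x => if 0 < x then φ (-Real.log x) else 0 with hψdef
    have hψcont : Continuous ψ := by
      rw [continuous_iff_continuousAt]
      intro x
      rcases lt_trichotomy x 0 with hx | hx | hx
      · have : ψ =ᶠ[nhds x] fun _ => 0 := by
          filter_upwards [Iio_mem_nhds hx] with y hy
          simp [hψdef, not_lt.2 (le_of_lt (mem_Iio.1 hy))]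
        exact (continuousAt_const.congr this.symm)
      · subst hx
        set δ : ℝ := Real.exp (-(|M|+1)) with hδ
        have hδpos : 0 < δ := Real.exp_pos _
        have : ψ =ᶠ[nhds 0] fun _ => 0 := by
          filter_upwards [Ioo_mem_nhds (by linarith : -δ < 0) hδpos] with y hy
          rcases le_or_gt y 0 with h0 | h0
          · simp [hψdef, not_lt.2 h0]
          · have hlog : Real.log y < -(|M|+1) := by
              have := Real.log_lt_log h0 hy.2
              rwa [Real.log_exp] at this
            have : M < |(-Real.log y)| := by
              have h1 : |M| + 1 < -Real.log y := by linarith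
              have h2 : M ≤ |M| := le_abs_self M
              exact lt_of_lt_of_le (by linarith) (le_abs_self _)
            simp [hψdef, h0, hφ0 _ this]
        exact (continuousAt_const.congr this.symm)
      · have heq' : ψ =ᶠ[nhds x] fun y => φ (-Real.log y) := by
          filter_upwards [Ioi_mem_nhds hx] with y hy
          have hy' : (0:ℝ) < y := hy
          simp [hψdef, hy']
        have : ContinuousAt (fun y => φ (-Real.log y)) x :=
          hφc.continuousAt.comp ((Real.continuousAt_log (ne_of_gt hx)).neg)
        exact this.congr heq'.symm
    have hψeq : ∀ t : ℝ, 0 < t → ψ (Real.exp (-t)) = φ t := by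
      intro t ht
      simp [hψdef, Real.exp_pos, Real.log_exp]
    -- reduce to set integral
    have hred : (∫ x, φ x • k x)
        = ∫ t in Ioi (0:ℝ), ((φ t : ℝ) : ℂ) * (((Real.exp (-t) : ℝ) : ℂ) * h t) := by
      rw [← integral_indicator measurableSet_Ioi]
      congr 1
      funext x
      by_cases hx : x ∈ Ioi (0:ℝ)
      · simp [hk, indicator_of_mem hx, Complex.real_smul]
      · simp [hk, indicator_of_notMem hx]
    set T : ℂ := ∫ t in Ioi (0:ℝ), ((φ t : ℝ) : ℂ) * (((Real.exp (-t) : ℝ) : ℂ) * h t) with hT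
    -- T is the integral of ψ(e^{-t}) e^{-t} h t
    have hTint : IntegrableOn
        (fun t : ℝ => ((φ t : ℝ) : ℂ) * (((Real.exp (-t) : ℝ) : ℂ) * h t)) (Ioi 0) := by
      obtain ⟨B, hB⟩ := hφs.exists_bound_of_continuous hφc
      refine Integrable.bdd_mul (c := B) hInt1 ?_ ?_
      · exact (Complex.continuous_ofReal.comp hφc).aestronglyMeasurable
      · exact ae_of_all _ fun x => by simpa [Complex.norm_real] using hB x
    have hTbound : ∀ ε : ℝ, 0 < ε → ‖T‖ ≤ ε * C := by
      intro ε hε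
      obtain ⟨q, hq⟩ := exists_polynomial_near_of_continuousOn 0 1 ψ
        hψcont.continuousOn ε hε
      have hqi := hA q
      have hdiff :
          T = ∫ t in Ioi (0:ℝ),
            (((φ t : ℝ) : ℂ) * (((Real.exp (-t) : ℝ) : ℂ) * h t)
              - ((Polynomial.eval (Real.exp (-t)) q * Real.exp (-t) : ℝ) : ℂ) * h t) := by
        rw [integral_sub hTint hqi.2, hqi.1, sub_zero]
      rw [hdiff]
      have hgmaj : IntegrableOn (fun t : ℝ => ε * (Real.exp (-t) * ‖h t‖)) (Ioi 0) :=
        hCint.const_mul ε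
      have hbd : ∀ᵐ t ∂(volume.restrict (Ioi (0:ℝ))),
          ‖((φ t : ℝ) : ℂ) * (((Real.exp (-t) : ℝ) : ℂ) * h t)
            - ((Polynomial.eval (Real.exp (-t)) q * Real.exp (-t) : ℝ) : ℂ) * h t‖
          ≤ ε * (Real.exp (-t) * ‖h t‖) := by
        refine (ae_restrict_iff' measurableSet_Ioi).2 (ae_of_all _ fun t ht => ?_)
        have ht' : (0:ℝ) < t := ht
        have hx1 : Real.exp (-t) ∈ Set.Icc (0:ℝ) 1 :=
          ⟨(Real.exp_pos _).le, Real.exp_le_one_iff.2 (by linarith)⟩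
        have heval := hq (Real.exp (-t)) hx1
        have hrw : ((φ t : ℝ) : ℂ) * (((Real.exp (-t) : ℝ) : ℂ) * h t)
            - ((Polynomial.eval (Real.exp (-t)) q * Real.exp (-t) : ℝ) : ℂ) * h t
            = (((ψ (Real.exp (-t)) - Polynomial.eval (Real.exp (-t)) q) * Real.exp (-t) : ℝ) : ℂ)
              * h t := by
          rw [← hψeq t ht']
          push_cast
          ring
        rw [hrw]
        rw [norm_mul, Complex.norm_real, Real.norm_eq_abs, abs_mul,
          _root_.abs_of_nonneg (Real.exp_pos (-t)).le]
        have habs : |ψ (Real.exp (-t)) - Polynomial.eval (Real.exp (-t)) q| ≤ ε := by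
          rw [abs_sub_comm]
          exact le_of_lt heval
        calc |ψ (Real.exp (-t)) - Polynomial.eval (Real.exp (-t)) q| * Real.exp (-t) * ‖h t‖
            ≤ ε * Real.exp (-t) * ‖h t‖ := by
              have h0 : (0:ℝ) ≤ ‖h t‖ := norm_nonneg _
              have h1 : (0:ℝ) ≤ Real.exp (-t) := (Real.exp_pos _).le
              exact mul_le_mul_of_nonneg_right
                (mul_le_mul_of_nonneg_right habs h1) h0
          _ = ε * (Real.exp (-t) * ‖h t‖) := by ring
      calc ‖∫ t in Ioi (0:ℝ),
            (((φ t : ℝ) : ℂ) * (((Real.exp (-t) : ℝ) : ℂ) * h t)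
              - ((Polynomial.eval (Real.exp (-t)) q * Real.exp (-t) : ℝ) : ℂ) * h t)‖
          ≤ ∫ t in Ioi (0:ℝ), ε * (Real.exp (-t) * ‖h t‖) :=
            norm_integral_le_of_norm_le hgmaj hbd
        _ = ε * C := by rw [integral_const_mul, hC]
    -- conclude T = 0
    have hT0 : T = 0 := by
      by_contra hne
      have hTpos : 0 < ‖T‖ := norm_pos_iff.2 hne
      have := hTbound (‖T‖ / (2 * (C + 1))) (by positivity)
      have hlt : ‖T‖ / (2 * (C + 1)) * C < ‖T‖ := by
        rw [div_mul_eq_mul_div, div_lt_iff₀ (by positivity)]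
        nlinarith [hTpos, hC0]
      linarith
    rw [hred]
    exact hT0
  -- k vanishes a.e.
  have hk0 : ∀ᵐ x, k x = 0 :=
    ae_eq_zero_of_integral_contDiff_smul_eq_zero hkint.locallyIntegrable hB
  have hae : f =ᵐ[volume.restrict (Ioi (0:ℝ))] g := by
    filter_upwards [ae_restrict_of_ae hk0, ae_restrict_mem measurableSet_Ioi] with x hx hmem
    rw [hk] at hx
    rw [indicator_of_mem hmem] at hx
    have hne : ((Real.exp (-x) : ℝ) : ℂ) ≠ 0 := by
      simp [Real.exp_ne_zero]
    have : h x = 0 := (mul_eq_zero.1 hx).resolve_left hne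
    have := sub_eq_zero.1 this
    exact this
  intro t ht
  exact Measure.eqOn_of_ae_eq hae hfcont hgcont
    (by rw [interior_Ioi]; exact subset_closure) ht
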